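/- Let $a \in \mathbb{R}$, $l > 0$, and $\lambda \in \mathbb{C}^*$. Then $\lambda^2$ is an eigenvalue of the operator $T_a = -d^2/dy^2$ on $L^2(0,l)$ with boundary conditions $u'(0) = -i a u(0)$, $u'(l) = i a u(l)$ if and only if $(a - \lambda)^2 e^{2 i \lambda l} = (a + \lambda)^2$. -/

import Mathlib

lemma expHasDeriv (c : ℂ) (x : ℝ) :
    HasDerivAt (fun t : ℝ => Complex.exp (c * t)) (c * Complex.exp (c * x)) x := by
  have h1 : HasDerivAt (fun z : ℂ => Complex.exp (c * z)) (c * Complex.exp (c * x)) (x : ℂ) := by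
    simpa [mul_comm] using ((hasDerivAt_id (x:ℂ)).const_mul c).cexp
  exact h1.comp_ofReal

lemma constIcc (l : ℝ) (hl : 0 < l) (F : ℝ → ℂ) (hF : Differentiable ℝ F)
    (h : ∀ x ∈ Set.Ico (0:ℝ) l, deriv F x = 0) : ∀ x ∈ Set.Icc (0:ℝ) l, F x = F 0 := by
  apply constant_of_derivWithin_zero (hF.differentiableOn)
  intro x hx
  rw [(hF x).derivWithin ((uniqueDiffOn_Icc hl) x (Set.Ico_subset_Icc_self hx))]
  exact h x hx

/-- `λ² ≠ 0` is an eigenvalue of the transverse operator `T_a = -d²/dy²` on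
`(0, l)` with boundary conditions `u'(0) = -i a u(0)`, `u'(l) = i a u(l)` if and
only if `(a - λ)² e^{2iλl} = (a + λ)²`. -/
theorem eigenvalue_iff_transcendental_equation
    (a l : ℝ) (hl : 0 < l) (lam : ℂ) (hlam : lam ≠ 0) :
    (∃ u : ℝ → ℂ, ContDiff ℝ 2 u ∧
      (∃ x ∈ Set.Icc (0 : ℝ) l, u x ≠ 0) ∧
      (∀ x ∈ Set.Icc (0 : ℝ) l, -(deriv (deriv u) x) = lam ^ 2 * u x) ∧
      deriv u 0 = -Complex.I * (a : ℂ) * u 0 ∧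
      deriv u l = Complex.I * (a : ℂ) * u l)
    ↔ ((a : ℂ) - lam) ^ 2 * Complex.exp (2 * Complex.I * lam * (l : ℂ))
        = ((a : ℂ) + lam) ^ 2 := by
  constructor
  · rintro ⟨u, hu, hne, hode, hb0, hbl⟩
    have hu1 : Differentiable ℝ u := hu.differentiable (by norm_num)
    have hu2 : Differentiable ℝ (deriv u) := by
      have h2 : ContDiff ℝ (1+1) u := by norm_num; exact hu
      exact (contDiff_succ_iff_deriv.mp h2).2.2.differentiable one_ne_zero
    have hfd : ∀ (s : ℂ) (x : ℝ), HasDerivAt (fun t => deriv u t + s * u t)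
        (deriv (deriv u) x + s * deriv u x) x := fun s x =>
      ((hu2 x).hasDerivAt).add (((hu1 x).hasDerivAt).const_mul s)
    have key : ∀ s : ℂ, s ^ 2 = -lam ^ 2 →
        ∀ x ∈ Set.Icc (0:ℝ) l,
          (deriv u x + s * u x) * Complex.exp (-s * x) = deriv u 0 + s * u 0 := by
      intro s hs
      have hc := constIcc l hl (fun t => (deriv u t + s * u t) * Complex.exp (-s * t))
        (fun x => ((hfd s x).mul (expHasDeriv (-s) x)).differentiableAt)
        (by
          intro x hx
          rw [HasDerivAt.deriv (f := fun t => (deriv u t + s * u t) * Complex.exp (-s * t)) ((hfd s x).mul (expHasDeriv (-s) x))]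
          have h2 : deriv (deriv u) x = -(lam ^ 2 * u x) := by
            linear_combination -hode x (Set.Ico_subset_Icc_self hx)
          rw [h2]
          linear_combination (-(u x * Complex.exp (-s * (x:ℂ)))) * hs)
      intro x hx
      simpa using hc x hx
    have hsq1 : (Complex.I * lam) ^ 2 = -lam ^ 2 := by
      linear_combination lam^2 * Complex.I_sq
    have hsq2 : (-(Complex.I * lam)) ^ 2 = -lam ^ 2 := by
      linear_combination lam^2 * Complex.I_sq
    have hmem : l ∈ Set.Icc (0:ℝ) l := Set.right_mem_Icc.2 hl.le
    have K1 := key (Complex.I * lam) hsq1 l hmem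
    have K2 := key (-(Complex.I * lam)) hsq2 l hmem
    rw [hbl, hb0] at K1 K2
    simp only [neg_neg] at K1 K2
    have hE : Complex.exp (Complex.I * lam * (l:ℂ)) * Complex.exp (-(Complex.I * lam) * (l:ℂ)) = 1 := by
      rw [← Complex.exp_add]; ring_nf; exact Complex.exp_zero
    have hexp2 : Complex.exp (2 * Complex.I * lam * (l:ℂ))
        = Complex.exp (Complex.I * lam * (l:ℂ)) * Complex.exp (Complex.I * lam * (l:ℂ)) := by
      rw [← Complex.exp_add]; ring_nf
    rw [hexp2]
    by_cases h0 : u 0 = 0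
    · exfalso
      obtain ⟨x, hx, hxne⟩ := hne
      apply hxne
      have A1 := key (Complex.I * lam) hsq1 x hx
      have A2 := key (-(Complex.I * lam)) hsq2 x hx
      rw [hb0, h0] at A1 A2
      simp only [neg_neg] at A1 A2
      have e1 : deriv u x + Complex.I * lam * u x = 0 := by
        rcases mul_eq_zero.mp (show (deriv u x + Complex.I * lam * u x)
            * Complex.exp (-(Complex.I * lam) * (x:ℂ)) = 0 by linear_combination A1) with h | h
        · exact h
        · exact absurd h (Complex.exp_ne_zero _)
      have e2 : deriv u x + -(Complex.I * lam) * u x = 0 := by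
        rcases mul_eq_zero.mp (show (deriv u x + -(Complex.I * lam) * u x)
            * Complex.exp (Complex.I * lam * (x:ℂ)) = 0 by linear_combination A2) with h | h
        · exact h
        · exact absurd h (Complex.exp_ne_zero _)
      have h2 : 2 * Complex.I * lam * u x = 0 := by linear_combination e1 - e2
      have hIl : (2:ℂ) * Complex.I * lam ≠ 0 := by
        simp [Complex.I_ne_zero, hlam]
      exact (mul_eq_zero.mp h2).resolve_left hIl
    · have T0 : (((a:ℂ) - lam) ^ 2 * (Complex.exp (Complex.I * lam * (l:ℂ)) * Complex.exp (Complex.I * lam * (l:ℂ)))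
          - ((a:ℂ) + lam) ^ 2) * (Complex.I * u 0) = 0 := by
        linear_combination ((a:ℂ)-lam) * Complex.exp (Complex.I * lam * (l:ℂ)) * Complex.exp (Complex.I * lam * (l:ℂ)) * K1
          - ((a:ℂ)+lam) * K2
          - Complex.I*((a:ℂ)+lam)*((a:ℂ)-lam)*(u l)*Complex.exp (Complex.I * lam * (l:ℂ))*hE
      have hne2 : Complex.I * u 0 ≠ 0 := mul_ne_zero Complex.I_ne_zero h0
      exact sub_eq_zero.mp ((mul_eq_zero.mp T0).resolve_right hne2)
  · intro h
    have hd : deriv (fun x : ℝ => (lam - a) * Complex.exp (Complex.I * lam * x)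
          + (lam + a) * Complex.exp (-(Complex.I * lam) * x))
        = fun x : ℝ => (lam - a) * (Complex.I * lam * Complex.exp (Complex.I * lam * x))
          + (lam + a) * (-(Complex.I * lam) * Complex.exp (-(Complex.I * lam) * x)) := by
      funext x
      exact (((expHasDeriv _ x).const_mul _).add ((expHasDeriv _ x).const_mul _)).deriv
    have hd2 : deriv (deriv (fun x : ℝ => (lam - a) * Complex.exp (Complex.I * lam * x)
          + (lam + a) * Complex.exp (-(Complex.I * lam) * x)))
        = fun x : ℝ => (lam - a) * (Complex.I * lam * (Complex.I * lam * Complex.exp (Complex.I * lam * x)))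
          + (lam + a) * (-(Complex.I * lam) * (-(Complex.I * lam) * Complex.exp (-(Complex.I * lam) * x))) := by
      rw [hd]; funext x
      exact ((((expHasDeriv _ x).const_mul _).const_mul _).add
        (((expHasDeriv _ x).const_mul _).const_mul _)).deriv
    refine ⟨fun x => (lam - a) * Complex.exp (Complex.I * lam * x)
        + (lam + a) * Complex.exp (-(Complex.I * lam) * x), ?_, ?_, ?_, ?_, ?_⟩
    · have he : ∀ c : ℂ, ContDiff ℝ 2 (fun x : ℝ => Complex.exp (c * x)) := fun c =>
        Complex.contDiff_exp.comp (contDiff_const.mul Complex.ofRealCLM.contDiff)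
      exact (contDiff_const.mul (he _)).add (contDiff_const.mul (he _))
    · refine ⟨0, Set.left_mem_Icc.2 hl.le, ?_⟩
      simp only [Complex.ofReal_zero, mul_zero, Complex.exp_zero, mul_one]
      intro hcon
      apply hlam
      have h2 : (2:ℂ) * lam = 0 := by linear_combination hcon
      simpa using h2
    · intro x hx
      rw [hd2]
      linear_combination -(lam - (a:ℂ)) * lam^2 * Complex.exp (Complex.I * lam * x)
          * Complex.I_sq - (lam + (a:ℂ)) * lam^2 * Complex.exp (-(Complex.I * lam) * x) * Complex.I_sq
    · rw [hd]
      simp only [Complex.ofReal_zero, mul_zero, neg_zero, zero_mul, Complex.exp_zero, mul_one]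
      ring
    · rw [hd]
      have hE : Complex.exp (Complex.I * lam * (l:ℂ)) * Complex.exp (-(Complex.I * lam) * (l:ℂ)) = 1 := by
        rw [← Complex.exp_add]; ring_nf; exact Complex.exp_zero
      have h' : ((a : ℂ) - lam) ^ 2 * (Complex.exp (Complex.I * lam * (l:ℂ)) * Complex.exp (Complex.I * lam * (l:ℂ)))
          = ((a : ℂ) + lam) ^ 2 := by
        rw [← Complex.exp_add, ← h]; congr 2; ring
      linear_combination Complex.I * Complex.exp (-(Complex.I*lam) * (l:ℂ)) * h'
        - Complex.I * ((a:ℂ)-lam)^2 * Complex.exp (Complex.I*lam*(l:ℂ)) * hE
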